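/- arXiv:2012.02467 — 4 statements merged into one kernel-verified Lean document; each statement's English description precedes it below -/
import Mathlib

section
/- For intervals in ℤ, the space of natural transformations from the interval module 𝕀[a,b] to the interval module 𝕀[c,d] is nonzero if and only if c ≤ a ≤ d ≤ b; and when nonzero, it is one-dimensional over K. -/
open CategoryTheory CategoryTheory.Limits Classical

attribute [local instance 2000] Preorder.smallCategory

noncomputable section

variable (K : Type) [Field K]

/-- Auxiliary submodule of `K`: all of `K` if `p` holds, `0` otherwise. -/
def gate (p : Prop) : Submodule K K := if p then ⊤ else ⊥

/-- Canonical map between submodules of `K`: the inclusion if possible, zero otherwise. -/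
def gateMap (S T : Submodule K K) : S →ₗ[K] T :=
  if h : S ≤ T then Submodule.inclusion h else 0

lemma gate_eq_zero {p : Prop} (hp : ¬ p) (v : gate K p) : v = 0 := by
  have hv := v.2
  simp only [gate, if_neg hp, Submodule.mem_bot] at hv
  exact Subtype.ext (by simpa using hv)

lemma gateMap_id (S : Submodule K K) : gateMap K S S = LinearMap.id := by
  ext v; simp [gateMap]

lemma gateMap_comp (p q r : Prop) (hpr : p → r → q) :
    (gateMap K (gate K q) (gate K r)).comp (gateMap K (gate K p) (gate K q)) =
      gateMap K (gate K p) (gate K r) := by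
  by_cases hp : p
  · by_cases hr : r
    · have hq := hpr hp hr
      apply LinearMap.ext; intro v
      have h1 : gate K p ≤ gate K q := by simp [gate, hp, hq]
      have h2 : gate K q ≤ gate K r := by simp [gate, hq, hr]
      have h3 : gate K p ≤ gate K r := by simp [gate, hp, hr]
      simp only [gateMap, dif_pos h1, dif_pos h2, dif_pos h3]
      rfl
    · apply LinearMap.ext; intro v
      rw [gate_eq_zero K hr ((gateMap K (gate K q) (gate K r) ∘ₗ gateMap K (gate K p) (gate K q)) v),
          gate_eq_zero K hr ((gateMap K (gate K p) (gate K r)) v)]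
  · apply LinearMap.ext; intro v
    rw [gate_eq_zero K hp v]
    simp

lemma gate_one_mem {p : Prop} (hp : p) : (1:K) ∈ gate K p := by
  simp [gate, hp]
lemma gate_mem {p : Prop} (hp : p) (k : K) : k ∈ gate K p := by
  simp [gate, hp]

lemma gate_eq_smul {p : Prop} (hp : p) (v : gate K p) :
    v = (v : K) • (⟨1, gate_one_mem K hp⟩ : gate K p) := by
  apply Subtype.ext; simp
lemma gateMap_val {p q : Prop} (hp : p) (hq : q) (v : gate K p) :
    ((gateMap K (gate K p) (gate K q)) v : K) = v := by
  have h : gate K p ≤ gate K q := by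
    intro k _; simp [gate, hq]
  rw [gateMap, dif_pos h]; rfl
lemma gate_square (P P' Q Q' : Prop) (h1 : P → Q' → Q) (h2 : P → Q' → P') (v : gate K P) :
    gateMap K (gate K P') (gate K Q') (gateMap K (gate K P) (gate K P') v) =
    gateMap K (gate K Q) (gate K Q') (gateMap K (gate K P) (gate K Q) v) := by
  by_cases hq' : Q'
  · by_cases hp : P
    · have hq := h1 hp hq'; have hp' := h2 hp hq'
      apply Subtype.ext
      rw [gateMap_val K hp' hq', gateMap_val K hp hp', gateMap_val K hq hq', gateMap_val K hp hq]
    · rw [gate_eq_zero K hp v]; simp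
  · rw [gate_eq_zero K hq' ((gateMap K (gate K P') (gate K Q')) ((gateMap K (gate K P) (gate K P')) v)),
        gate_eq_zero K hq' ((gateMap K (gate K Q) (gate K Q')) ((gateMap K (gate K P) (gate K Q)) v))]

/-- The interval persistence module `𝕀[a,b]` over a preorder `P`:
it is `K` on `{x | a ≤ x ≤ b}` with identity internal maps, and `0` elsewhere. -/
def intervalMod {P : Type} [Preorder P] (a b : P) : P ⥤ ModuleCat.{0} K where
  obj x := ModuleCat.of K (gate K (a ≤ x ∧ x ≤ b))
  map {x y} f := ModuleCat.ofHom (gateMap K (gate K (a ≤ x ∧ x ≤ b)) (gate K (a ≤ y ∧ y ≤ b)))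
  map_id x := congrArg ModuleCat.ofHom (gateMap_id K (gate K (a ≤ x ∧ x ≤ b)))
  map_comp {x y z} f g := congrArg ModuleCat.ofHom
    (gateMap_comp K (a ≤ x ∧ x ≤ b) (a ≤ y ∧ y ≤ b) (a ≤ z ∧ z ≤ b)
      (fun hp hr => ⟨hp.1.trans (leOfHom f), (leOfHom g).trans hr.2⟩)).symm

/-- The basic natural transformation `𝕀[a,b] → 𝕀[c,d]`. -/
def bHom (a b c d : ℤ) (h1 : c ≤ a) (h3 : d ≤ b) :
    intervalMod K a b ⟶ intervalMod K c d where
  app x := ModuleCat.ofHom (gateMap K (gate K (a ≤ x ∧ x ≤ b)) (gate K (c ≤ x ∧ x ≤ d)))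
  naturality {x y} g := by
    apply ModuleCat.hom_ext; apply LinearMap.ext; intro v
    exact (gate_square K (a ≤ x ∧ x ≤ b) (a ≤ y ∧ y ≤ b) (c ≤ x ∧ x ≤ d) (c ≤ y ∧ y ≤ d)
      (fun hp hq' => ⟨h1.trans hp.1, (leOfHom g).trans hq'.2⟩)
      (fun hp hq' => ⟨hp.1.trans (leOfHom g), hq'.2.trans h3⟩) v)

/-- Evaluation of a natural transformation at the point `a` on the element `1`. -/
def ev (a b c d : ℤ) (hab : a ≤ b) :
    (intervalMod K a b ⟶ intervalMod K c d) →ₗ[K] K where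
  toFun f := ((f.app (a:ℤ)) ⟨1, gate_one_mem K ⟨le_refl a, hab⟩⟩).1
  map_add' f g := by
    simp only [NatTrans.app_add]
    rfl
  map_smul' s f := by
    simp only [NatTrans.app_smul]
    rfl

lemma ev_bHom (a b c d : ℤ) (hab : a ≤ b) (h1 : c ≤ a) (h2 : a ≤ d) (h3 : d ≤ b) :
    ev K a b c d hab (bHom K a b c d h1 h3) = 1 := by
  show ((gateMap K (gate K ((a:ℤ) ≤ a ∧ (a:ℤ) ≤ b)) (gate K (c ≤ (a:ℤ) ∧ (a:ℤ) ≤ d)))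
      ⟨1, gate_one_mem K ⟨le_refl a, hab⟩⟩).1 = 1
  rw [gateMap_val K ⟨le_refl a, hab⟩ ⟨h1, h2⟩]

lemma ev_zero_imp (a b c d : ℤ) (hab : a ≤ b) (h1 : c ≤ a) (h2 : a ≤ d) (h3 : d ≤ b)
    (f : intervalMod K a b ⟶ intervalMod K c d) (hf : ev K a b c d hab f = 0) : f = 0 := by
  have happa : f.app (a:ℤ) = 0 := by
    apply ModuleCat.hom_ext; apply LinearMap.ext; intro v
    have hv := gate_eq_smul K ⟨le_refl (a:ℤ), hab⟩ v
    have h0 : (f.app (a:ℤ)) ⟨1, gate_one_mem K ⟨le_refl (a:ℤ), hab⟩⟩ = 0 := Subtype.ext hf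
    calc (f.app (a:ℤ)) v
        = (f.app (a:ℤ)) (v.1 • ⟨1, gate_one_mem K ⟨le_refl (a:ℤ), hab⟩⟩) := congrArg (fun y => (f.app (a:ℤ)) y) hv
      _ = v.1 • (f.app (a:ℤ)) ⟨1, gate_one_mem K ⟨le_refl (a:ℤ), hab⟩⟩ := map_smul _ _ _
      _ = 0 := by rw [h0, smul_zero]
  apply NatTrans.ext
  funext x
  have hx : f.app x = 0 := by
    apply ModuleCat.hom_ext; apply LinearMap.ext; intro v
    by_cases hP : a ≤ x ∧ x ≤ b
    · by_cases hQ : c ≤ x ∧ x ≤ d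
      · set w : gate K ((a:ℤ) ≤ a ∧ (a:ℤ) ≤ b) := ⟨v.1, gate_mem K ⟨le_refl _, hab⟩ _⟩ with hw
        have hnat : f.app x (gateMap K (gate K ((a:ℤ) ≤ a ∧ (a:ℤ) ≤ b)) (gate K (a ≤ x ∧ x ≤ b)) w)
            = gateMap K (gate K (c ≤ (a:ℤ) ∧ (a:ℤ) ≤ d)) (gate K (c ≤ x ∧ x ≤ d)) (f.app (a:ℤ) w) :=
          ConcreteCategory.congr_hom (f.naturality (homOfLE hP.1)) w
        have hWv : gateMap K (gate K ((a:ℤ) ≤ a ∧ (a:ℤ) ≤ b)) (gate K (a ≤ x ∧ x ≤ b)) w = v :=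
          Subtype.ext ((gateMap_val K ⟨le_refl _, hab⟩ hP w).trans rfl)
        have hfw : f.app (a:ℤ) w = 0 := by rw [happa]; rfl
        rw [hWv, hfw] at hnat
        exact hnat.trans (map_zero _)
      · exact gate_eq_zero K hQ _
    · rw [gate_eq_zero K hP v]; refine (map_zero _).trans ?_
      rfl
  simp [hx]

/-- For intervals in `ℤ`, the space of natural transformations `𝕀[a,b] → 𝕀[c,d]` is
nonzero iff `c ≤ a ≤ d ≤ b`, and in that case it is one-dimensional over `K`. -/
theorem interval_hom_iff (a b c d : ℤ) (hab : a ≤ b) (hcd : c ≤ d) :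
    ((∃ f : intervalMod K a b ⟶ intervalMod K c d, f ≠ 0) ↔ (c ≤ a ∧ a ≤ d ∧ d ≤ b)) ∧
    ((c ≤ a ∧ a ≤ d ∧ d ≤ b) →
      Module.finrank K (intervalMod K a b ⟶ intervalMod K c d) = 1) := by
  constructor
  · constructor
    · rintro ⟨f, hf⟩
      have hx : ∃ x : ℤ, f.app x ≠ 0 := by
        by_contra h
        push_neg at h
        exact hf (NatTrans.ext (funext fun x => by simpa using h x))
      obtain ⟨x, hx⟩ := hx
      have hv : ∃ v, f.app x v ≠ 0 := by
        by_contra h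
        push_neg at h
        exact hx (ModuleCat.hom_ext (LinearMap.ext h))
      obtain ⟨v, hv⟩ := hv
      have hP : a ≤ x ∧ x ≤ b := by
        by_contra hP
        exact hv (by rw [gate_eq_zero K hP v]; exact map_zero _)
      have hQ : c ≤ x ∧ x ≤ d := by
        by_contra hQ
        exact hv (gate_eq_zero K hQ _)
      refine ⟨?_, hP.1.trans hQ.2, ?_⟩
      · by_contra hca
        set w : gate K ((a:ℤ) ≤ a ∧ (a:ℤ) ≤ b) := ⟨v.1, gate_mem K ⟨le_refl _, hab⟩ _⟩ with hw
        have hnat : f.app x (gateMap K (gate K ((a:ℤ) ≤ a ∧ (a:ℤ) ≤ b)) (gate K (a ≤ x ∧ x ≤ b)) w)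
            = gateMap K (gate K (c ≤ (a:ℤ) ∧ (a:ℤ) ≤ d)) (gate K (c ≤ x ∧ x ≤ d)) (f.app (a:ℤ) w) :=
          ConcreteCategory.congr_hom (f.naturality (homOfLE hP.1)) w
        have hfw : f.app (a:ℤ) w = 0 := gate_eq_zero K (fun hq => hca hq.1) _
        have hWv : gateMap K (gate K ((a:ℤ) ≤ a ∧ (a:ℤ) ≤ b)) (gate K (a ≤ x ∧ x ≤ b)) w = v :=
          Subtype.ext ((gateMap_val K ⟨le_refl _, hab⟩ hP w).trans rfl)
        rw [hWv, hfw] at hnat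
        exact hv (hnat.trans (map_zero _))
      · by_contra hdb
        have hnat : f.app (d:ℤ) (gateMap K (gate K (a ≤ x ∧ x ≤ b)) (gate K (a ≤ (d:ℤ) ∧ (d:ℤ) ≤ b)) v)
            = gateMap K (gate K (c ≤ x ∧ x ≤ d)) (gate K (c ≤ (d:ℤ) ∧ (d:ℤ) ≤ d)) (f.app x v) :=
          ConcreteCategory.congr_hom (f.naturality (homOfLE hQ.2)) v
        have h0 : gateMap K (gate K (a ≤ x ∧ x ≤ b)) (gate K (a ≤ (d:ℤ) ∧ (d:ℤ) ≤ b)) v = 0 :=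
          gate_eq_zero K (fun hq => hdb hq.2) _
        rw [h0] at hnat; replace hnat := (map_zero (f.app (d:ℤ)).hom).symm.trans hnat
        have hval := gateMap_val K (p := (c ≤ x ∧ x ≤ d)) (q := (c ≤ (d:ℤ) ∧ (d:ℤ) ≤ d)) hQ ⟨hcd, le_refl (d:ℤ)⟩ (f.app x v)
        rw [← hnat] at hval
        exact hv (Subtype.ext hval.symm)
    · rintro ⟨h1, h2, h3⟩
      refine ⟨bHom K a b c d h1 h3, fun h0 => ?_⟩
      have := ev_bHom K a b c d hab h1 h2 h3
      rw [h0, map_zero] at this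
      exact zero_ne_one this
  · rintro ⟨h1, h2, h3⟩
    have hbij : Function.Bijective (ev K a b c d hab) := by
      constructor
      · intro f g hfg
        have : f - g = 0 :=
          ev_zero_imp K a b c d hab h1 h2 h3 (f - g) (by rw [map_sub, hfg, sub_self])
        exact sub_eq_zero.mp this
      · intro s
        refine ⟨s • bHom K a b c d h1 h3, ?_⟩
        rw [map_smul, ev_bHom K a b c d hab h1 h2 h3, smul_eq_mul, mul_one]
    have e : (intervalMod K a b ⟶ intervalMod K c d) ≃ₗ[K] K :=
      LinearEquiv.ofBijective (ev K a b c d hab) hbij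
    rw [e.finrank_eq, Module.finrank_self]

end
end

section
/- Let M be a persistence module over the grid {1,…,m} × {1,2} (a commutative ladder). If there exist vertices x ≤ y ≤ z with M(x) ≠ 0, M(y) = 0, and M(z) ≠ 0, then M is decomposable, i.e., M is isomorphic to a direct sum of two nonzero persistence modules. -/
open CategoryTheory CategoryTheory.Limits

attribute [local instance 2000] Preorder.smallCategory
attribute [local instance] HasFiniteBiproducts.of_hasFiniteProducts

namespace LadderAux

variable {K : Type} [Field K]


private lemma proj_comm {V W : Type} [AddCommGroup V] [Module K V] [AddCommGroup W] [Module K W]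
    (f : V →ₗ[K] W) {Av Bv : Submodule K V} {Aw Bw : Submodule K W}
    (hcv : IsCompl Av Bv) (hcw : IsCompl Aw Bw)
    (hA : ∀ u ∈ Av, f u ∈ Aw) (hB : ∀ u ∈ Bv, f u ∈ Bw) (u : V) :
    ((Aw.linearProjOfIsCompl Bw hcw) (f u) : W) = f ((Av.linearProjOfIsCompl Bv hcv) u) := by
  have hu : u ∈ Av ⊔ Bv := by rw [hcv.sup_eq_top]; trivial
  obtain ⟨a, ha, b, hb, rfl⟩ := Submodule.mem_sup.1 hu
  have l1 : ((Aw.linearProjOfIsCompl Bw hcw) (f a) : W) = f a :=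
    congrArg Subtype.val (Submodule.linearProjOfIsCompl_apply_left hcw ⟨f a, hA a ha⟩)
  have r1 : (Aw.linearProjOfIsCompl Bw hcw) (f b) = 0 :=
    Submodule.linearProjOfIsCompl_apply_right' hcw (hB b hb)
  have hv : (Av.linearProjOfIsCompl Bv hcv) (a + b) = ⟨a, ha⟩ := by
    have hb0 : (Av.linearProjOfIsCompl Bv hcv) b = 0 := Submodule.linearProjOfIsCompl_apply_right' hcv hb
    rw [map_add, hb0, add_zero]
    exact Submodule.linearProjOfIsCompl_apply_left hcv ⟨a, ha⟩
  have hw : (Aw.linearProjOfIsCompl Bw hcw) (f (a + b))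
      = (Aw.linearProjOfIsCompl Bw hcw) (f a) + (Aw.linearProjOfIsCompl Bw hcw) (f b) := by
    rw [map_add, map_add]
  rw [hw, r1, add_zero, l1, hv]

variable {J : Type} [SmallCategory J]

/-- The subfunctor associated to an invariant family of submodules. -/
noncomputable def subFunctor (M : J ⥤ ModuleCat.{0} K) (A : ∀ v : J, Submodule K (M.obj v))
    (hA : ∀ ⦃v w : J⦄ (h : v ⟶ w), ∀ u ∈ A v, M.map h u ∈ A w) : J ⥤ ModuleCat.{0} K where
  obj v := ModuleCat.of K (A v)
  map {v w} h := ModuleCat.ofHom (LinearMap.restrict (M.map h).hom (hA h))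
  map_id v := by
    ext u
    show M.map (𝟙 v) u.1 = u.1
    rw [M.map_id]; rfl
  map_comp {v w u} f g := by
    ext t
    show M.map (f ≫ g) t.1 = _
    rw [M.map_comp]; rfl

theorem split_pack (M : J ⥤ ModuleCat.{0} K) (A B : ∀ v : J, Submodule K (M.obj v))
    (hA : ∀ ⦃v w : J⦄ (h : v ⟶ w), ∀ u ∈ A v, M.map h u ∈ A w)
    (hB : ∀ ⦃v w : J⦄ (h : v ⟶ w), ∀ u ∈ B v, M.map h u ∈ B w)
    (hc : ∀ v, IsCompl (A v) (B v))
    (x z : J) (hAx : A x = ⊤) (hBz : B z = ⊤)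
    (hx : ¬ IsZero (M.obj x)) (hz : ¬ IsZero (M.obj z)) :
    ∃ M₁ M₂ : J ⥤ ModuleCat.{0} K,
      ¬ IsZero M₁ ∧ ¬ IsZero M₂ ∧ Nonempty (M ≅ M₁ ⊞ M₂) := by
  classical
  refine ⟨subFunctor M A hA, subFunctor M B hB, ?_, ?_, ?_⟩
  · intro h
    exact hx (((Functor.isZero_iff _).1 h x).of_iso
      ((show M.obj x ≅ (subFunctor M A hA).obj x from (LinearEquiv.ofTop (A x) hAx).toModuleIso.symm)))
  · intro h
    exact hz (((Functor.isZero_iff _).1 h z).of_iso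
      ((show M.obj z ≅ (subFunctor M B hB).obj z from (LinearEquiv.ofTop (B z) hBz).toModuleIso.symm)))
  · let ι₁ : subFunctor M A hA ⟶ M :=
      { app := fun v => ModuleCat.ofHom (A v).subtype
        naturality := fun v w h => rfl }
    let ι₂ : subFunctor M B hB ⟶ M :=
      { app := fun v => ModuleCat.ofHom (B v).subtype
        naturality := fun v w h => rfl }
    let π₁ : M ⟶ subFunctor M A hA :=
      { app := fun v => ModuleCat.ofHom ((A v).linearProjOfIsCompl (B v) (hc v))
        naturality := by
          intro v w h
          ext u
          refine Subtype.ext ?_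
          exact proj_comm (K := K) (M.map h).hom (hc v) (hc w) (hA h) (hB h) u }
    let π₂ : M ⟶ subFunctor M B hB :=
      { app := fun v => ModuleCat.ofHom ((B v).linearProjOfIsCompl (A v) (hc v).symm)
        naturality := by
          intro v w h
          ext u
          refine Subtype.ext ?_
          exact proj_comm (K := K) (M.map h).hom (hc v).symm (hc w).symm (hB h) (hA h) u }
    let b : BinaryBicone (subFunctor M A hA) (subFunctor M B hB) :=
      { pt := M
        fst := π₁
        snd := π₂
        inl := ι₁
        inr := ι₂
        inl_fst := by
          ext v u
          exact Submodule.linearProjOfIsCompl_apply_left (hc v) u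
        inl_snd := by
          ext v u
          simp only [NatTrans.comp_app, zero_app, LinearMap.zero_apply]
          exact Submodule.linearProjOfIsCompl_apply_right' (hc v).symm u.2
        inr_fst := by
          ext v u
          simp only [NatTrans.comp_app, zero_app, LinearMap.zero_apply]
          exact Submodule.linearProjOfIsCompl_apply_right' (hc v) u.2
        inr_snd := by
          ext v u
          exact Submodule.linearProjOfIsCompl_apply_left (hc v).symm u }
    have total : b.fst ≫ b.inl + b.snd ≫ b.inr = 𝟙 b.pt := by
      ext v u
      exact Submodule.projection_add_projection_eq_self (hc v) u
    exact ⟨biprod.uniqueUpToIso _ _ (isBinaryBilimitOfTotal b total)⟩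


section Grid

variable {m : ℕ}

/-- bottom vertex -/
@[reducible]
def vB (i : ℕ) (h : i < m) : Fin m × Fin 2 := (⟨i, h⟩, ⟨0, by omega⟩)

/-- top vertex -/
@[reducible]
def vT (i : ℕ) (h : i < m) : Fin m × Fin 2 := (⟨i, h⟩, ⟨1, by omega⟩)

lemma leBB {a c : ℕ} (ha : a < m) (hc : c < m) (h : a ≤ c) : vB a ha ≤ vB c hc := by
  rw [vB, vB, Prod.mk_le_mk]
  exact ⟨Fin.mk_le_mk.mpr h, le_refl _⟩

lemma leTT {a c : ℕ} (ha : a < m) (hc : c < m) (h : a ≤ c) : vT a ha ≤ vT c hc := by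
  rw [vT, vT, Prod.mk_le_mk]
  exact ⟨Fin.mk_le_mk.mpr h, le_refl _⟩

lemma leBT {a c : ℕ} (ha : a < m) (hc : c < m) (h : a ≤ c) : vB a ha ≤ vT c hc := by
  rw [vB, vT, Prod.mk_le_mk]
  exact ⟨Fin.mk_le_mk.mpr h, Fin.mk_le_mk.mpr (by omega)⟩

lemma two_cases {n : ℕ} (h : n < 2) : n = 0 ∨ n = 1 := by omega

instance ladderCS : CategoryStruct (Fin m × Fin 2) :=
  (Preorder.smallCategory _).toCategoryStruct

attribute [local instance 3000] ladderCS

instance homSub (v w : Fin m × Fin 2) : Subsingleton (v ⟶ w) :=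
  ⟨fun a b => by
    change ULift (PLift (v ≤ w)) at a b
    cases a with
    | up a' =>
      cases b with
      | up b' => cases a'; cases b'; rfl⟩

variable (M : (Fin m × Fin 2) ⥤ ModuleCat.{0} K)

lemma map_eq {v w : Fin m × Fin 2} (h h' : v ⟶ w) : M.map h = M.map h' :=
  congrArg M.map (Subsingleton.elim h h')

lemma map_self {v : Fin m × Fin 2} (h : v ⟶ v) (u : M.obj v) : M.map h u = u := by
  rw [map_eq M h (𝟙 v), M.map_id]
  rfl

lemma map_map {v w u : Fin m × Fin 2} (h1 : v ⟶ w) (h2 : w ⟶ u) (t : M.obj v) :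
    M.map h2 (M.map h1 t) = M.map (h1 ≫ h2) t := by
  rw [M.map_comp]; rfl

lemma map_factor {v w u : Fin m × Fin 2} (h : v ⟶ u) (h1 : v ⟶ w) (h2 : w ⟶ u)
    (t : M.obj v) : M.map h t = M.map h2 (M.map h1 t) := by
  have : M.map h2 (M.map h1 t) = M.map (h1 ≫ h2) t := by rw [M.map_comp]; rfl
  rw [this, map_eq M (h1 ≫ h2) h]

lemma map_zero_through {y v w : Fin m × Fin 2} (hy : IsZero (M.obj y))
    (h1 : v ≤ y) (h2 : y ≤ w) (h : v ⟶ w) (t : M.obj v) : M.map h t = 0 := by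
  rw [map_factor M h (homOfLE h1) (homOfLE h2) t]
  have hz : (M.map (homOfLE h2) : M.obj y ⟶ M.obj w) = 0 := hy.eq_of_src _ _
  rw [hz]
  rfl

lemma exists_isCompl_ge {V : Type} [AddCommGroup V] [Module K V]
    {U W : Submodule K V} (h : Disjoint U W) : ∃ C, IsCompl W C ∧ U ≤ C := by
  obtain ⟨E, hE⟩ := Submodule.exists_isCompl (U ⊔ W)
  refine ⟨U ⊔ E, ⟨?_, ?_⟩, le_sup_left⟩
  · rw [Submodule.disjoint_def]
    intro x hxW hxUE
    obtain ⟨uu, huu, e, he, rfl⟩ := Submodule.mem_sup.1 hxUE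
    have he' : e ∈ (U ⊔ W) ⊓ E := by
      constructor
      · rw [← add_sub_cancel_left uu e]
        exact Submodule.sub_mem _ (Submodule.mem_sup_right hxW) (Submodule.mem_sup_left huu)
      · exact he
    rw [hE.inf_eq_bot] at he'
    rw [Submodule.mem_bot] at he'
    subst he'
    rw [add_zero] at hxW ⊢
    have : uu ∈ U ⊓ W := ⟨huu, hxW⟩
    rw [h.eq_bot] at this
    exact this
  · rw [codisjoint_iff, eq_top_iff, ← hE.sup_eq_top]
    exact sup_le (sup_le (le_sup_of_le_right le_sup_left) le_sup_left)
      (le_sup_of_le_right le_sup_right)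

lemma exists_compl_le {V : Type} [AddCommGroup V] [Module K V]
    {P W : Submodule K V} (hspan : P ⊔ W = ⊤) : ∃ C, C ≤ W ∧ IsCompl P C := by
  obtain ⟨D, hD⟩ := Submodule.exists_isCompl (P ⊓ W)
  refine ⟨W ⊓ D, inf_le_left, ⟨?_, ?_⟩⟩
  · rw [Submodule.disjoint_def]
    intro x hxP hxWD
    have : x ∈ (P ⊓ W) ⊓ D := ⟨⟨hxP, hxWD.1⟩, hxWD.2⟩
    rw [hD.inf_eq_bot] at this
    exact this
  · have key : W ≤ P ⊔ (W ⊓ D) := by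
      intro w hw
      obtain ⟨a, ha, d, hd, had⟩ := Submodule.mem_sup.1
        (by rw [hD.sup_eq_top]; trivial : w ∈ (P ⊓ W) ⊔ D)
      have hdW : d ∈ W ⊓ D := by
        refine ⟨?_, hd⟩
        have hd' : d = w - a := by rw [← had, add_sub_cancel_left]
        rw [hd']
        exact Submodule.sub_mem _ hw ha.2
      rw [← had]
      exact Submodule.add_mem _ (Submodule.mem_sup_left ha.1) (Submodule.mem_sup_right hdW)
    rw [codisjoint_iff, eq_top_iff]
    exact le_trans (le_of_eq hspan.symm) (sup_le le_sup_left key)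


section Case0

variable (M : (Fin m × Fin 2) ⥤ ModuleCat.{0} K) (jF : Fin m)

lemma corner_lt : jF.val - 1 < m := Nat.lt_of_le_of_lt (Nat.sub_le _ _) jF.isLt

/-- the range of the vertical map at column `j-1` -/
noncomputable def Rcor : Submodule K (M.obj (vT (jF.val - 1) (corner_lt jF))) :=
  LinearMap.range (M.map (homOfLE (leBT (corner_lt jF) (corner_lt jF) (le_refl _))) :
    M.obj (vB (jF.val - 1) (corner_lt jF)) ⟶ M.obj (vT (jF.val - 1) (corner_lt jF))).hom

/-- preimage tower of the corner vertical range -/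
noncomputable def Qfull (i : ℕ) (hi : i < m) : Submodule K (M.obj (vT i hi)) :=
  if hij : i < jF.val then
    Submodule.comap (M.map (homOfLE (leTT hi (corner_lt jF) (by omega)))).hom (Rcor M jF)
  else ⊥

lemma Qfull_comap (a c : ℕ) (ha : a < m) (hc : c < m) (hac : a ≤ c) (hcj : c < jF.val) :
    Qfull M jF a ha =
      Submodule.comap (M.map (homOfLE (leTT ha hc hac))).hom (Qfull M jF c hc) := by
  have haj : a < jF.val := lt_of_le_of_lt hac hcj
  rw [Qfull, dif_pos haj, Qfull, dif_pos hcj]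
  ext u
  simp only [Submodule.mem_comap]
  rw [map_factor M (homOfLE (leTT ha (corner_lt jF) (by omega)))
    (homOfLE (leTT ha hc hac)) (homOfLE (leTT hc (corner_lt jF) (by omega))) u]

lemma range_vert_le_Qfull (i : ℕ) (hi : i < m) (hij : i < jF.val) (u : M.obj (vB i hi)) :
    M.map (homOfLE (leBT hi hi (le_refl i))) u ∈ Qfull M jF i hi := by
  rw [Qfull, dif_pos hij]
  simp only [Submodule.mem_comap, Rcor, LinearMap.mem_range]
  refine ⟨M.map (homOfLE (leBB hi (corner_lt jF) (by omega))) u, ?_⟩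
  have e1 := (map_factor M (homOfLE (leBT hi (corner_lt jF) (by omega)))
    (homOfLE (leBB hi (corner_lt jF) (by omega)))
    (homOfLE (leBT (corner_lt jF) (corner_lt jF) (le_refl _))) u).symm
  have e2 := map_factor M (homOfLE (leBT hi (corner_lt jF) (by omega)))
    (homOfLE (leBT hi hi (le_refl i))) (homOfLE (leTT hi (corner_lt jF) (by omega))) u
  exact e1.trans e2

lemma Qfull_mapsto_zero (hy : IsZero (M.obj (vB jF.val jF.isLt)))
    (a c : ℕ) (ha : a < m) (hc : c < m) (hac : a ≤ c)
    (haj : a < jF.val) (hjc : jF.val ≤ c)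
    (u : M.obj (vT a ha)) (hu : u ∈ Qfull M jF a ha) :
    M.map (homOfLE (leTT ha hc hac)) u = 0 := by
  rw [Qfull, dif_pos haj] at hu
  simp only [Submodule.mem_comap, Rcor, LinearMap.mem_range] at hu
  obtain ⟨w, hw⟩ := hu
  rw [map_factor M (homOfLE (leTT ha hc hac)) (homOfLE (leTT ha (corner_lt jF) (by omega)))
    (homOfLE (leTT (corner_lt jF) hc (by omega))) u, ← hw]
  rw [← map_factor M (homOfLE (leBT (corner_lt jF) hc (by omega)))
    (homOfLE (leBT (corner_lt jF) (corner_lt jF) (le_refl _)))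
    (homOfLE (leTT (corner_lt jF) hc (by omega))) w]
  exact map_zero_through M hy (leBB (corner_lt jF) jF.isLt (by omega))
    (leBT jF.isLt hc hjc) _ w

lemma bot_to_top_mem (a c : ℕ) (ha : a < m) (hc : c < m) (hcj : c < jF.val) (hac : a ≤ c)
    (u : M.obj (vB a ha)) :
    M.map (homOfLE (leBT ha hc hac)) u ∈ Qfull M jF c hc := by
  rw [Qfull, dif_pos hcj]
  simp only [Submodule.mem_comap, Rcor, LinearMap.mem_range]
  refine ⟨M.map (homOfLE (leBB ha (corner_lt jF) (by omega))) u, ?_⟩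
  have e1 := (map_factor M (homOfLE (leBT ha (corner_lt jF) (by omega)))
    (homOfLE (leBB ha (corner_lt jF) (by omega)))
    (homOfLE (leBT (corner_lt jF) (corner_lt jF) (le_refl _))) u).symm
  have e2 := map_factor M (homOfLE (leBT ha (corner_lt jF) (by omega)))
    (homOfLE (leBT ha hc hac)) (homOfLE (leTT hc (corner_lt jF) (by omega))) u
  exact e1.trans e2

lemma Qfull_eq_bot (i : ℕ) (hi : i < m) (hij : ¬ i < jF.val) : Qfull M jF i hi = ⊥ :=
  dif_neg hij

/-- ascending chain of complements on the top-left row -/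
noncomputable def Pasc : (i : ℕ) → (hi : i < m) →
    Σ' p : Submodule K (M.obj (vT i hi)), IsCompl (Qfull M jF i hi) p
  | 0, hi => ⟨(Submodule.exists_isCompl (Qfull M jF 0 hi)).choose,
      (Submodule.exists_isCompl (Qfull M jF 0 hi)).choose_spec⟩
  | (i+1), hi =>
    have hd : Disjoint
        (Submodule.map (M.map (homOfLE (leTT (Nat.lt_of_succ_lt hi) hi (Nat.le_succ i)))).hom
          (Pasc i (Nat.lt_of_succ_lt hi)).1)
        (Qfull M jF (i+1) hi) := by
      by_cases hij : i + 1 < jF.val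
      · rw [Submodule.disjoint_def]
        intro x hxU hxQ
        obtain ⟨p, hp, rfl⟩ := Submodule.mem_map.1 hxU
        have hpQ : p ∈ Qfull M jF i (Nat.lt_of_succ_lt hi) := by
          rw [Qfull_comap M jF i (i+1) (Nat.lt_of_succ_lt hi) hi (Nat.le_succ i) hij]
          exact hxQ
        have hp0 : p = 0 :=
          (Submodule.disjoint_def.1 (Pasc i (Nat.lt_of_succ_lt hi)).2.disjoint) p hpQ hp
        rw [hp0, map_zero]
      · rw [Qfull_eq_bot M jF (i+1) hi hij]
        exact disjoint_bot_right
    ⟨(exists_isCompl_ge hd).choose, (exists_isCompl_ge hd).choose_spec.1⟩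

lemma Pasc_disj (i : ℕ) (hi : i + 1 < m) :
    Disjoint
      (Submodule.map (M.map (homOfLE (leTT (Nat.lt_of_succ_lt hi) hi (Nat.le_succ i)))).hom
        (Pasc M jF i (Nat.lt_of_succ_lt hi)).1)
      (Qfull M jF (i+1) hi) := by
  by_cases hij : i + 1 < jF.val
  · rw [Submodule.disjoint_def]
    intro x hxU hxQ
    obtain ⟨p, hp, rfl⟩ := Submodule.mem_map.1 hxU
    have hpQ : p ∈ Qfull M jF i (Nat.lt_of_succ_lt hi) := by
      rw [Qfull_comap M jF i (i+1) (Nat.lt_of_succ_lt hi) hi (Nat.le_succ i) hij]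
      exact hxQ
    have hp0 : p = 0 :=
      (Submodule.disjoint_def.1 (Pasc M jF i (Nat.lt_of_succ_lt hi)).2.disjoint) p hpQ hp
    rw [hp0, map_zero]
  · rw [Qfull_eq_bot M jF (i+1) hi hij]
    exact disjoint_bot_right

lemma Pasc_mono (i : ℕ) (hi : i + 1 < m) :
    Submodule.map (M.map (homOfLE (leTT (Nat.lt_of_succ_lt hi) hi (Nat.le_succ i)))).hom
      (Pasc M jF i (Nat.lt_of_succ_lt hi)).1 ≤ (Pasc M jF (i+1) hi).1 := by
  simp only [Pasc]
  exact (exists_isCompl_ge (Pasc_disj M jF i hi)).choose_spec.2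

lemma Pasc_top (i : ℕ) (hi : i < m) (hij : jF.val ≤ i) : (Pasc M jF i hi).1 = ⊤ := by
  have h := (Pasc M jF i hi).2.codisjoint
  rw [codisjoint_iff] at h
  have hq := Qfull_eq_bot M jF i hi (by omega)
  rw [eq_top_iff]
  calc (⊤ : Submodule K (M.obj (vT i hi))) = Qfull M jF i hi ⊔ (Pasc M jF i hi).1 := h.symm
    _ ≤ (Pasc M jF i hi).1 := sup_le (hq.le.trans bot_le) (le_refl _)

lemma Pasc_stab (a : ℕ) (ha : a < m) (c : ℕ) (hac : a ≤ c) :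
    ∀ (hc : c < m) (u : M.obj (vT a ha)), u ∈ (Pasc M jF a ha).1 →
      M.map (homOfLE (leTT ha hc hac)) u ∈ (Pasc M jF c hc).1 := by
  induction c, hac using Nat.le_induction with
  | base =>
    intro hc u hu
    rw [map_self M _ u]
    exact hu
  | succ c hac ih =>
    intro hc u hu
    have hcm : c < m := Nat.lt_of_succ_lt hc
    have h1 := ih hcm u hu
    rw [map_factor M _ (homOfLE (leTT ha hcm hac)) (homOfLE (leTT hcm hc (Nat.le_succ c))) u]
    exact Pasc_mono M jF c hc (Submodule.mem_map_of_mem h1)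

noncomputable def Afam0 : ∀ v : Fin m × Fin 2, Submodule K (M.obj v)
  | (i, ⟨0, _⟩) => if i.val < jF.val then ⊤ else ⊥
  | (i, ⟨1, _⟩) => Qfull M jF i.val i.isLt
  | (_, ⟨_+2, hs⟩) => absurd hs (by omega)

noncomputable def Bfam0 : ∀ v : Fin m × Fin 2, Submodule K (M.obj v)
  | (i, ⟨0, _⟩) => if i.val < jF.val then ⊥ else ⊤
  | (i, ⟨1, _⟩) => (Pasc M jF i.val i.isLt).1
  | (_, ⟨_+2, hs⟩) => absurd hs (by omega)


theorem case0 (hy : IsZero (M.obj (vB jF.val jF.isLt)))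
    (x z : Fin m × Fin 2) (hxy : x ≤ vB jF.val jF.isLt) (hyz : vB jF.val jF.isLt ≤ z)
    (hx : ¬ IsZero (M.obj x)) (hz : ¬ IsZero (M.obj z)) :
    ∃ M₁ M₂ : (Fin m × Fin 2) ⥤ ModuleCat.{0} K,
      ¬ IsZero M₁ ∧ ¬ IsZero M₂ ∧ Nonempty (M ≅ M₁ ⊞ M₂) := by
  have hA : ∀ ⦃v w : Fin m × Fin 2⦄ (h : v ⟶ w), ∀ u ∈ Afam0 M jF v,
      M.map h u ∈ Afam0 M jF w := by
    rintro ⟨⟨a, ha⟩, ⟨sv, hsv⟩⟩ ⟨⟨c, hc⟩, ⟨sw, hsw⟩⟩ h u hu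
    have hle := leOfHom h
    have hac : a ≤ c := Fin.mk_le_mk.mp hle.1
    have hst : sv ≤ sw := Fin.mk_le_mk.mp hle.2
    rcases two_cases hsv with rfl | rfl <;>
      rcases two_cases hsw with rfl | rfl
    · -- bottom to bottom
      simp only [Afam0] at hu ⊢
      by_cases hcj : c < jF.val
      · rw [if_pos hcj]; exact Submodule.mem_top
      · rw [if_neg hcj, Submodule.mem_bot]
        by_cases haj : a < jF.val
        · exact map_zero_through M hy (leBB ha jF.isLt (by omega))
            (leBB jF.isLt hc (by omega)) h u
        · rw [if_neg haj, Submodule.mem_bot] at hu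
          rw [hu, map_zero]
    · -- bottom to top
      simp only [Afam0] at hu ⊢
      by_cases hcj : c < jF.val
      · rw [map_eq M h (homOfLE (leBT ha hc hac))]
        exact bot_to_top_mem M jF a c ha hc hcj hac u
      · rw [Qfull_eq_bot M jF c hc hcj, Submodule.mem_bot]
        by_cases haj : a < jF.val
        · exact map_zero_through M hy (leBB ha jF.isLt (by omega))
            (leBT jF.isLt hc (by omega)) h u
        · rw [if_neg haj, Submodule.mem_bot] at hu
          rw [hu, map_zero]
    · exact absurd hst (by omega)
    · -- top to top
      simp only [Afam0] at hu ⊢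
      by_cases hcj : c < jF.val
      · rw [Qfull_comap M jF a c ha hc hac hcj] at hu
        rw [map_eq M h (homOfLE (leTT ha hc hac))]
        exact hu
      · rw [Qfull_eq_bot M jF c hc hcj, Submodule.mem_bot]
        by_cases haj : a < jF.val
        · rw [map_eq M h (homOfLE (leTT ha hc hac))]
          exact Qfull_mapsto_zero M jF hy a c ha hc hac haj (by omega) u hu
        · rw [Qfull_eq_bot M jF a ha haj, Submodule.mem_bot] at hu
          rw [hu, map_zero]
  have hB : ∀ ⦃v w : Fin m × Fin 2⦄ (h : v ⟶ w), ∀ u ∈ Bfam0 M jF v,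
      M.map h u ∈ Bfam0 M jF w := by
    rintro ⟨⟨a, ha⟩, ⟨sv, hsv⟩⟩ ⟨⟨c, hc⟩, ⟨sw, hsw⟩⟩ h u hu
    have hle := leOfHom h
    have hac : a ≤ c := Fin.mk_le_mk.mp hle.1
    have hst : sv ≤ sw := Fin.mk_le_mk.mp hle.2
    rcases two_cases hsv with rfl | rfl <;>
      rcases two_cases hsw with rfl | rfl
    · simp only [Bfam0] at hu ⊢
      by_cases haj : a < jF.val
      · rw [if_pos haj, Submodule.mem_bot] at hu
        rw [hu, map_zero]
        exact Submodule.zero_mem _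
      · rw [if_neg (by omega : ¬ c < jF.val)]
        exact Submodule.mem_top
    · simp only [Bfam0] at hu ⊢
      by_cases haj : a < jF.val
      · rw [if_pos haj, Submodule.mem_bot] at hu
        rw [hu, map_zero]
        exact Submodule.zero_mem _
      · rw [Pasc_top M jF c hc (by omega)]
        exact Submodule.mem_top
    · exact absurd hst (by omega)
    · simp only [Bfam0] at hu ⊢
      rw [map_eq M h (homOfLE (leTT ha hc hac))]
      exact Pasc_stab M jF a ha c hac hc u hu
  have hcompl : ∀ v, IsCompl (Afam0 M jF v) (Bfam0 M jF v) := by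
    rintro ⟨⟨a, ha⟩, ⟨s, hs⟩⟩
    rcases two_cases hs with rfl | rfl
    · simp only [Afam0, Bfam0]
      by_cases haj : a < jF.val
      · rw [if_pos haj, if_pos haj]; exact isCompl_top_bot
      · rw [if_neg haj, if_neg haj]; exact isCompl_bot_top
    · simp only [Afam0, Bfam0]
      exact (Pasc M jF a ha).2
  obtain ⟨⟨x1, hx1⟩, ⟨sx, hsx⟩⟩ := x
  obtain ⟨⟨z1, hz1⟩, ⟨sz, hsz⟩⟩ := z
  have hsx0 : sx ≤ 0 := Fin.mk_le_mk.mp hxy.2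
  rcases two_cases hsx with rfl | rfl
  swap
  · exact absurd hsx0 (by omega)
  have hx1le : x1 ≤ jF.val := Fin.mk_le_mk.mp hxy.1
  have hz1ge : jF.val ≤ z1 := Fin.mk_le_mk.mp hyz.1
  have hx1j : x1 < jF.val := by
    rcases Nat.lt_or_ge x1 jF.val with h' | h'
    · exact h'
    · exfalso
      have : x1 = jF.val := by omega
      subst this
      exact hx hy
  have hAx : Afam0 M jF ((⟨x1, hx1⟩ : Fin m), (⟨0, hsx⟩ : Fin 2)) = ⊤ := by
    simp only [Afam0]
    rw [if_pos hx1j]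
  have hBz : Bfam0 M jF ((⟨z1, hz1⟩ : Fin m), (⟨sz, hsz⟩ : Fin 2)) = ⊤ := by
    rcases two_cases hsz with rfl | rfl
    · simp only [Bfam0]
      rw [if_neg (by omega : ¬ z1 < jF.val)]
    · simp only [Bfam0]
      exact Pasc_top M jF z1 hz1 hz1ge
  exact split_pack M (Afam0 M jF) (Bfam0 M jF) hA hB hcompl _ _ hAx hBz hx hz

end Case0

section Case1

variable (M : (Fin m × Fin 2) ⥤ ModuleCat.{0} K) (jF : Fin m)

/-- image tower of the bottom map out of column `j` -/
noncomputable def Pfull (k : ℕ) (hk : k < m) : Submodule K (M.obj (vB k hk)) :=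
  if hjk : jF.val < k then
    LinearMap.range (M.map (homOfLE (leBB jF.isLt hk (by omega))) :
      M.obj (vB jF.val jF.isLt) ⟶ M.obj (vB k hk)).hom
  else ⊤

lemma Pfull_eq_top (k : ℕ) (hk : k < m) (h : ¬ jF.val < k) : Pfull M jF k hk = ⊤ :=
  dif_neg h

lemma Pfull_mem (k : ℕ) (hk : k < m) (hjk : jF.val < k) (w : M.obj (vB jF.val jF.isLt)) :
    M.map (homOfLE (leBB jF.isLt hk (by omega))) w ∈ Pfull M jF k hk := by
  rw [Pfull, dif_pos hjk]
  exact ⟨w, rfl⟩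

lemma Pfull_map (a c : ℕ) (ha : a < m) (hc : c < m) (hac : a ≤ c) :
    ∀ u ∈ Pfull M jF a ha, M.map (homOfLE (leBB ha hc hac)) u ∈ Pfull M jF c hc := by
  intro u hu
  by_cases hjc : jF.val < c
  · by_cases hja : jF.val < a
    · rw [Pfull, dif_pos hja] at hu
      obtain ⟨w, rfl⟩ := LinearMap.mem_range.1 hu
      rw [← map_factor M (homOfLE (leBB jF.isLt hc (by omega)))
        (homOfLE (leBB jF.isLt ha (by omega))) (homOfLE (leBB ha hc hac)) w]
      exact Pfull_mem M jF c hc hjc w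
    · rw [map_factor M (homOfLE (leBB ha hc hac)) (homOfLE (leBB ha jF.isLt (by omega)))
        (homOfLE (leBB jF.isLt hc (by omega))) u]
      exact Pfull_mem M jF c hc hjc _
  · rw [Pfull_eq_top M jF c hc hjc]
    exact Submodule.mem_top

lemma span_step (k : ℕ) (h1 : k + 1 < m) (hk : k < m)
    (q : Submodule K (M.obj (vB (k+1) h1))) (hcq : IsCompl (Pfull M jF (k+1) h1) q) :
    Pfull M jF k hk ⊔
      Submodule.comap (M.map (homOfLE (leBB hk h1 (Nat.le_succ k)))).hom q = ⊤ := by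
  by_cases hjk : jF.val < k
  · rw [eq_top_iff]
    intro u _
    have hmem : M.map (homOfLE (leBB hk h1 (Nat.le_succ k))) u ∈
        Pfull M jF (k+1) h1 ⊔ q := by rw [hcq.sup_eq_top]; trivial
    obtain ⟨p, hp, qq, hq, hpq⟩ := Submodule.mem_sup.1 hmem
    rw [Pfull, dif_pos (by omega : jF.val < k + 1)] at hp
    obtain ⟨w, hw⟩ := LinearMap.mem_range.1 hp
    refine Submodule.mem_sup.2 ⟨M.map (homOfLE (leBB jF.isLt hk (by omega))) w,
      Pfull_mem M jF k hk hjk w,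
      u - M.map (homOfLE (leBB jF.isLt hk (by omega))) w, ?_, by abel⟩
    rw [Submodule.mem_comap, map_sub]
    have e2 : M.map (homOfLE (leBB hk h1 (Nat.le_succ k)))
        (M.map (homOfLE (leBB jF.isLt hk (by omega))) w) = p := by
      rw [← map_factor M (homOfLE (leBB jF.isLt h1 (by omega)))
        (homOfLE (leBB jF.isLt hk (by omega))) (homOfLE (leBB hk h1 (Nat.le_succ k))) w]
      exact hw
    rw [e2]
    have e3 : M.map (homOfLE (leBB hk h1 (Nat.le_succ k))) u - p = qq := by
      rw [← hpq]; abel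
    rw [e3]
    exact hq
  · rw [Pfull_eq_top M jF k hk hjk]
    exact top_sup_eq _

/-- descending chain of complements on the bottom-right row -/
noncomputable def Qdesc (k : ℕ) (hk : k < m) :
    Σ' q : Submodule K (M.obj (vB k hk)), IsCompl (Pfull M jF k hk) q :=
  if h1 : k + 1 < m then
    let next := Qdesc (k+1) h1
    have hspan := span_step M jF k h1 hk next.1 next.2
    ⟨(exists_compl_le hspan).choose, (exists_compl_le hspan).choose_spec.2⟩
  else
    ⟨(Submodule.exists_isCompl (Pfull M jF k hk)).choose,
     (Submodule.exists_isCompl (Pfull M jF k hk)).choose_spec⟩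
termination_by m - k
decreasing_by omega

lemma Qdesc_mono (k : ℕ) (hk : k < m) (h1 : k + 1 < m) :
    Submodule.map (M.map (homOfLE (leBB hk h1 (Nat.le_succ k)))).hom (Qdesc M jF k hk).1 ≤
      (Qdesc M jF (k+1) h1).1 := by
  rw [Submodule.map_le_iff_le_comap]
  conv_lhs => rw [Qdesc]
  rw [dif_pos h1]
  exact (exists_compl_le (span_step M jF k h1 hk (Qdesc M jF (k+1) h1).1
    (Qdesc M jF (k+1) h1).2)).choose_spec.1

lemma Qdesc_bot (k : ℕ) (hk : k < m) (hkj : k ≤ jF.val) : (Qdesc M jF k hk).1 = ⊥ := by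
  have hd := (Qdesc M jF k hk).2.disjoint
  have hp := Pfull_eq_top M jF k hk (by omega)
  exact disjoint_top.1 ((hd.mono_left hp.ge).symm)

lemma Qdesc_stab (a : ℕ) (ha : a < m) (c : ℕ) (hac : a ≤ c) :
    ∀ (hc : c < m) (u : M.obj (vB a ha)), u ∈ (Qdesc M jF a ha).1 →
      M.map (homOfLE (leBB ha hc hac)) u ∈ (Qdesc M jF c hc).1 := by
  induction c, hac using Nat.le_induction with
  | base =>
    intro hc u hu
    rw [map_self M _ u]
    exact hu
  | succ c hac ih =>
    intro hc u hu
    have hcm : c < m := Nat.lt_of_succ_lt hc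
    have h1 := ih hcm u hu
    rw [map_factor M _ (homOfLE (leBB ha hcm hac)) (homOfLE (leBB hcm hc (Nat.le_succ c))) u]
    exact Qdesc_mono M jF c hcm hc (Submodule.mem_map_of_mem h1)

noncomputable def Afam1 : ∀ v : Fin m × Fin 2, Submodule K (M.obj v)
  | (i, ⟨0, _⟩) => Pfull M jF i.val i.isLt
  | (i, ⟨1, _⟩) => if i.val ≤ jF.val then ⊤ else ⊥
  | (_, ⟨_+2, hs⟩) => absurd hs (by omega)

noncomputable def Bfam1 : ∀ v : Fin m × Fin 2, Submodule K (M.obj v)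
  | (i, ⟨0, _⟩) => (Qdesc M jF i.val i.isLt).1
  | (i, ⟨1, _⟩) => if i.val ≤ jF.val then ⊥ else ⊤
  | (_, ⟨_+2, hs⟩) => absurd hs (by omega)

theorem case1 (hy : IsZero (M.obj (vT jF.val jF.isLt)))
    (x z : Fin m × Fin 2) (hxy : x ≤ vT jF.val jF.isLt) (hyz : vT jF.val jF.isLt ≤ z)
    (hx : ¬ IsZero (M.obj x)) (hz : ¬ IsZero (M.obj z)) :
    ∃ M₁ M₂ : (Fin m × Fin 2) ⥤ ModuleCat.{0} K,
      ¬ IsZero M₁ ∧ ¬ IsZero M₂ ∧ Nonempty (M ≅ M₁ ⊞ M₂) := by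
  have hA : ∀ ⦃v w : Fin m × Fin 2⦄ (h : v ⟶ w), ∀ u ∈ Afam1 M jF v,
      M.map h u ∈ Afam1 M jF w := by
    rintro ⟨⟨a, ha⟩, ⟨sv, hsv⟩⟩ ⟨⟨c, hc⟩, ⟨sw, hsw⟩⟩ h u hu
    have hle := leOfHom h
    have hac : a ≤ c := Fin.mk_le_mk.mp hle.1
    have hst : sv ≤ sw := Fin.mk_le_mk.mp hle.2
    rcases two_cases hsv with rfl | rfl <;>
      rcases two_cases hsw with rfl | rfl
    · -- bottom to bottom
      simp only [Afam1] at hu ⊢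
      rw [map_eq M h (homOfLE (leBB ha hc hac))]
      exact Pfull_map M jF a c ha hc hac u hu
    · -- bottom to top
      simp only [Afam1] at hu ⊢
      by_cases hcj : c ≤ jF.val
      · rw [if_pos hcj]; exact Submodule.mem_top
      · rw [if_neg hcj, Submodule.mem_bot]
        by_cases haj : a ≤ jF.val
        · exact map_zero_through M hy (leBT ha jF.isLt haj) (leTT jF.isLt hc (by omega)) h u
        · rw [Pfull, dif_pos (by omega : jF.val < a)] at hu
          obtain ⟨w, rfl⟩ := LinearMap.mem_range.1 hu
          erw [map_map M]
          exact map_zero_through M hy (leBT jF.isLt jF.isLt (le_refl _))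
            (leTT jF.isLt hc (by omega)) _ w
    · exact absurd hst (by omega)
    · -- top to top
      simp only [Afam1] at hu ⊢
      by_cases hcj : c ≤ jF.val
      · rw [if_pos hcj]; exact Submodule.mem_top
      · rw [if_neg hcj, Submodule.mem_bot]
        by_cases haj : a ≤ jF.val
        · exact map_zero_through M hy (leTT ha jF.isLt haj) (leTT jF.isLt hc (by omega)) h u
        · rw [if_neg haj, Submodule.mem_bot] at hu
          rw [hu, map_zero]
  have hB : ∀ ⦃v w : Fin m × Fin 2⦄ (h : v ⟶ w), ∀ u ∈ Bfam1 M jF v,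
      M.map h u ∈ Bfam1 M jF w := by
    rintro ⟨⟨a, ha⟩, ⟨sv, hsv⟩⟩ ⟨⟨c, hc⟩, ⟨sw, hsw⟩⟩ h u hu
    have hle := leOfHom h
    have hac : a ≤ c := Fin.mk_le_mk.mp hle.1
    have hst : sv ≤ sw := Fin.mk_le_mk.mp hle.2
    rcases two_cases hsv with rfl | rfl <;>
      rcases two_cases hsw with rfl | rfl
    · simp only [Bfam1] at hu ⊢
      rw [map_eq M h (homOfLE (leBB ha hc hac))]
      exact Qdesc_stab M jF a ha c hac hc u hu
    · simp only [Bfam1] at hu ⊢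
      by_cases haj : a ≤ jF.val
      · rw [Qdesc_bot M jF a ha haj, Submodule.mem_bot] at hu
        rw [hu, map_zero]
        exact Submodule.zero_mem _
      · rw [if_neg (by omega : ¬ c ≤ jF.val)]
        exact Submodule.mem_top
    · exact absurd hst (by omega)
    · simp only [Bfam1] at hu ⊢
      by_cases haj : a ≤ jF.val
      · rw [if_pos haj, Submodule.mem_bot] at hu
        rw [hu, map_zero]
        exact Submodule.zero_mem _
      · rw [if_neg (by omega : ¬ c ≤ jF.val)]
        exact Submodule.mem_top
  have hcompl : ∀ v, IsCompl (Afam1 M jF v) (Bfam1 M jF v) := by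
    rintro ⟨⟨a, ha⟩, ⟨s, hs⟩⟩
    rcases two_cases hs with rfl | rfl
    · simp only [Afam1, Bfam1]
      exact (Qdesc M jF a ha).2
    · simp only [Afam1, Bfam1]
      by_cases haj : a ≤ jF.val
      · rw [if_pos haj, if_pos haj]; exact isCompl_top_bot
      · rw [if_neg haj, if_neg haj]; exact isCompl_bot_top
  obtain ⟨⟨x1, hx1⟩, ⟨sx, hsx⟩⟩ := x
  obtain ⟨⟨z1, hz1⟩, ⟨sz, hsz⟩⟩ := z
  have hx1le : x1 ≤ jF.val := Fin.mk_le_mk.mp hxy.1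
  have hz1ge : jF.val ≤ z1 := Fin.mk_le_mk.mp hyz.1
  have hsz1 : (1 : ℕ) ≤ sz := Fin.mk_le_mk.mp hyz.2
  rcases two_cases hsz with rfl | rfl
  · exact absurd hsz1 (by omega)
  have hz1j : jF.val < z1 := by
    rcases Nat.lt_or_ge jF.val z1 with h' | h'
    · exact h'
    · exfalso
      have : z1 = jF.val := by omega
      subst this
      exact hz hy
  have hAx : Afam1 M jF ((⟨x1, hx1⟩ : Fin m), (⟨sx, hsx⟩ : Fin 2)) = ⊤ := by
    rcases two_cases hsx with rfl | rfl
    · simp only [Afam1]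
      exact Pfull_eq_top M jF x1 hx1 (by omega)
    · simp only [Afam1]
      rw [if_pos hx1le]
  have hBz : Bfam1 M jF ((⟨z1, hz1⟩ : Fin m), (⟨1, hsz⟩ : Fin 2)) = ⊤ := by
    simp only [Bfam1]
    rw [if_neg (by omega : ¬ z1 ≤ jF.val)]
  exact split_pack M (Afam1 M jF) (Bfam1 M jF) hA hB hcompl _ _ hAx hBz hx hz

end Case1

end Grid

end LadderAux

/-- Let `M` be a persistence module over the commutative ladder `{1,…,m} × {1,2}`
(with the product order). If there are vertices `x ≤ y ≤ z` with `M(x) ≠ 0`, `M(y) = 0`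
and `M(z) ≠ 0`, then `M` is decomposable: `M ≅ M₁ ⊞ M₂` with both `M₁`, `M₂` nonzero. -/
theorem ladder_nonconvex_support_decomposable (K : Type) [Field K] (m : ℕ)
    (M : (Fin m × Fin 2) ⥤ ModuleCat.{0} K)
    (hfd : ∀ v : Fin m × Fin 2, FiniteDimensional K (M.obj v))
    (x y z : Fin m × Fin 2) (hxy : x ≤ y) (hyz : y ≤ z)
    (hx : ¬ IsZero (M.obj x)) (hy : IsZero (M.obj y)) (hz : ¬ IsZero (M.obj z)) :
    ∃ M₁ M₂ : (Fin m × Fin 2) ⥤ ModuleCat.{0} K,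
      ¬ IsZero M₁ ∧ ¬ IsZero M₂ ∧ Nonempty (M ≅ M₁ ⊞ M₂) := by
  obtain ⟨yF, ⟨sy, hsy⟩⟩ := y
  rcases LadderAux.two_cases hsy with rfl | rfl
  · exact LadderAux.case0 M yF hy x z hxy hyz hx hz
  · exact LadderAux.case1 M yF hy x z hxy hyz hx hz
end

section
/- Let Ŝ be a representation of the A₃ quiver in persistence modules of the form I → V'' → V, and let Ŝ' be its extension by a surjection p : V ↠ W appended at the end. If End(Ŝ) is local and W has finite total dimension, then End(Ŝ') is local. In particular, if φ ∈ End(Ŝ') restricts to an invertible endomorphism on Ŝ, then φ|_W is an isomorphism. -/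
open CategoryTheory CategoryTheory.Limits

attribute [local instance 2000] Preorder.smallCategory

/-- The inclusion of the first three vertices of `A₄` (as `Fin 3 ⥤ Fin 4`). -/
def incl3 : Fin 3 ⥤ Fin 4 :=
  Monotone.functor (f := (Fin.castSucc : Fin 3 → Fin 4))
    (fun _ _ h => Fin.castSucc_le_castSucc_iff.mpr h)

/-- Let `Ŝ' : I → V'' → V → W` be a representation of the `A₄` quiver (modelled as the
poset `Fin 4`) in persistence modules over `ℤⁿ`, whose last map `p : V ⟶ W` is a
pointwise surjection, with `W` of finite total dimension (pointwise finite dimensional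
with finite support).  Let `Ŝ = incl3 ⋙ Ŝ'` be the restriction of `Ŝ'` to the first
three vertices (the `A₃` part `I → V'' → V`).  If `End(Ŝ)` is local then `End(Ŝ')` is
local; in particular every endomorphism of `Ŝ'` restricting to an invertible
endomorphism of `Ŝ` has invertible component on `W`. -/
theorem end_local_of_appended_surjection
    (K : Type) [Field K] (n : ℕ)
    (S' : Fin 4 ⥤ ((Fin n → ℤ) ⥤ ModuleCat.{0} K))
    -- the last structure map `p : V ↠ W` is pointwise surjective:
    (hp : ∀ x : Fin n → ℤ,
      Function.Surjective ((S'.map (homOfLE (by decide : (2 : Fin 4) ≤ 3))).app x))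
    -- `W = S'.obj 3` has finite total dimension:
    (hWfd : ∀ x : Fin n → ℤ, FiniteDimensional K ((S'.obj 3).obj x))
    (hWsupp : {x : Fin n → ℤ | ¬ IsZero ((S'.obj 3).obj x)}.Finite)
    (hS : IsLocalRing (End (incl3 ⋙ S'))) :
    IsLocalRing (End S') ∧
    ∀ φ : End S',
      IsUnit (show End (incl3 ⋙ S') from Functor.whiskerLeft incl3 φ) → IsIso (φ.app 3) := by
  classical
  have h23 : incl3.obj 2 = (2 : Fin 4) := by decide
  -- Key step: an endomorphism whose restriction is invertible has invertible `W`-component.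
  have key : ∀ φ : End S',
      IsUnit (show End (incl3 ⋙ S') from Functor.whiskerLeft incl3 φ) → IsIso (φ.app 3) := by
    intro φ hφ
    have hiso : IsIso (Functor.whiskerLeft incl3 φ) :=
      (isUnit_iff_isIso (show End (incl3 ⋙ S') from Functor.whiskerLeft incl3 φ)).mp hφ
    -- hence the component at vertex 2 (i.e. on `V`) is an isomorphism
    have h2 : IsIso (φ.app 2) := by
      have h := h23
      have : IsIso ((Functor.whiskerLeft incl3 φ).app (2 : Fin 3)) := inferInstance
      revert this
      show IsIso (φ.app (incl3.obj 2)) → _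
      rw [h]
      exact id
    -- naturality:  p ≫ φ.app 3 = φ.app 2 ≫ p
    have hnat := φ.naturality (homOfLE (by decide : (2 : Fin 4) ≤ 3))
    -- pointwise surjectivity of φ.app 3
    have hsurj : ∀ x : Fin n → ℤ, Function.Surjective ((φ.app 3).app x) := by
      intro x
      have h2x : IsIso ((φ.app 2).app x) := inferInstance
      have h2surj : Function.Surjective ((φ.app 2).app x) :=
        ((ConcreteCategory.isIso_iff_bijective _).mp h2x).2
      have hc : (S'.map (homOfLE (by decide : (2 : Fin 4) ≤ 3))).app x ≫ (φ.app 3).app x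
          = (φ.app 2).app x ≫ (S'.map (homOfLE (by decide : (2 : Fin 4) ≤ 3))).app x := by
        have := NatTrans.congr_app hnat x
        simp only [NatTrans.comp_app] at this
        exact this
      intro w
      obtain ⟨u, hu⟩ := hp x w
      obtain ⟨v, hv⟩ := h2surj u
      refine ⟨(S'.map (homOfLE (by decide : (2 : Fin 4) ≤ 3))).app x v, ?_⟩
      have hcv := ConcreteCategory.congr_hom hc v
      have hcv' : (φ.app 3).app x ((S'.map (homOfLE (by decide : (2 : Fin 4) ≤ 3))).app x v)
          = (S'.map (homOfLE (by decide : (2 : Fin 4) ≤ 3))).app x ((φ.app 2).app x v) := hcv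
      rw [hcv', hv, hu]
    -- finite-dimensionality: a surjective endomorphism is bijective
    have hbij : ∀ x : Fin n → ℤ, Function.Bijective ((φ.app 3).app x) := by
      intro x
      haveI := hWfd x
      exact ⟨LinearMap.injective_iff_surjective.mpr (hsurj x), hsurj x⟩
    have : ∀ x : Fin n → ℤ, IsIso ((φ.app 3).app x) := fun x =>
      (ConcreteCategory.isIso_iff_bijective _).mpr (hbij x)
    exact NatIso.isIso_of_isIso_app _
  refine ⟨?_, key⟩
  -- restriction to the first three vertices is additive and unital
  have hres_one : Functor.whiskerLeft incl3 (1 : End S') = (1 : End (incl3 ⋙ S')) := rfl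
  have hres_zero : Functor.whiskerLeft incl3 (0 : End S') = (0 : End (incl3 ⋙ S')) := rfl
  have hres_add : ∀ a b : End S',
      Functor.whiskerLeft incl3 (a + b)
        = (Functor.whiskerLeft incl3 a + Functor.whiskerLeft incl3 b : End (incl3 ⋙ S')) := fun a b => rfl
  haveI : Nontrivial (End S') := by
    refine ⟨1, 0, fun h => ?_⟩
    have : (1 : End (incl3 ⋙ S')) = 0 := by
      rw [← hres_one, h, hres_zero]
    exact one_ne_zero this
  refine ⟨fun {a b} hab => ?_⟩
  have hab' : Functor.whiskerLeft incl3 a + Functor.whiskerLeft incl3 b = (1 : End (incl3 ⋙ S')) := by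
    rw [← hres_add, hab, hres_one]
  have hiso_of : ∀ c : End S',
      IsUnit (show End (incl3 ⋙ S') from Functor.whiskerLeft incl3 c) → IsUnit c := by
    intro c hc
    have h3 : IsIso (c.app 3) := key c hc
    have hiso : IsIso (Functor.whiskerLeft incl3 c) :=
      (isUnit_iff_isIso (show End (incl3 ⋙ S') from Functor.whiskerLeft incl3 c)).mp hc
    have happ : ∀ i : Fin 4, IsIso (c.app i) := by
      intro i
      fin_cases i
      · have h := show incl3.obj 0 = (0 : Fin 4) by decide
        have : IsIso ((Functor.whiskerLeft incl3 c).app (0 : Fin 3)) := inferInstance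
        revert this
        show IsIso (c.app (incl3.obj 0)) → _
        rw [h]
        exact id
      · have h := show incl3.obj 1 = (1 : Fin 4) by decide
        have : IsIso ((Functor.whiskerLeft incl3 c).app (1 : Fin 3)) := inferInstance
        revert this
        show IsIso (c.app (incl3.obj 1)) → _
        rw [h]
        exact id
      · have h := h23
        have : IsIso ((Functor.whiskerLeft incl3 c).app (2 : Fin 3)) := inferInstance
        revert this
        show IsIso (c.app (incl3.obj 2)) → _
        rw [h]
        exact id
      · exact h3
    haveI : IsIso c := NatIso.isIso_of_isIso_app c
    exact (isUnit_iff_isIso c).mpr this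
  rcases hS.isUnit_or_isUnit_of_add_one hab' with h | h
  · exact Or.inl (hiso_of a h)
  · exact Or.inr (hiso_of b h)
end

section
/- Let M be a persistence module over ℤ^{n+1} obtained by concatenating (as described) a countable sequence of finite candy modules, where each finite truncation between consecutive connecting vertices is indecomposable. If M = M₁ ⊕ M₂ with M₁, M₂ nonzero, then there exists a finite convex subgrid G of ℤ^{n+1} such that M|_G = M₁|_G ⊕ M₂|_G is a nontrivial decomposition of an indecomposable module — a contradiction. Hence M is indecomposable. -/
open CategoryTheory CategoryTheory.Limits

attribute [local instance] HasFiniteBiproducts.of_hasFiniteProducts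
attribute [local instance 2000] Preorder.smallCategory

/-- Restriction of a persistence module over `ℤ^{n+1}` to a subgrid `G`. -/
noncomputable def restrictTo {K : Type} [Field K] {n : ℕ} (M : (Fin (n + 1) → ℤ) ⥤ ModuleCat.{0} K)
    (G : Set (Fin (n + 1) → ℤ)) : G ⥤ ModuleCat.{0} K :=
  (Monotone.functor (f := (Subtype.val : G → (Fin (n + 1) → ℤ)))
    (fun _ _ h => h)) ⋙ M

section Aux

variable {K : Type} [Field K] {n : ℕ}

lemma whiskerLeft_add' {C D E : Type*} [Category C] [Category D] [Category E]
    [Preadditive E] (F : C ⥤ D) {G H : D ⥤ E} (f g : G ⟶ H) :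
    Functor.whiskerLeft F (f + g) = Functor.whiskerLeft F f + Functor.whiskerLeft F g := by
  ext X
  rfl

/-- Restriction commutes with binary biproducts of functors. -/
noncomputable def restrictBiprodIso (M₁ M₂ : (Fin (n + 1) → ℤ) ⥤ ModuleCat.{0} K)
    (G : Set (Fin (n + 1) → ℤ)) :
    restrictTo (M₁ ⊞ M₂) G ≅ restrictTo M₁ G ⊞ restrictTo M₂ G where
  hom := biprod.lift (Functor.whiskerLeft _ biprod.fst) (Functor.whiskerLeft _ biprod.snd)
  inv := biprod.desc (Functor.whiskerLeft _ biprod.inl) (Functor.whiskerLeft _ biprod.inr)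
  hom_inv_id := by
    erw [biprod.lift_desc, ← Functor.whiskerLeft_comp, ← Functor.whiskerLeft_comp, ← whiskerLeft_add',
      biprod.total]
    rfl
  inv_hom_id := by
    apply biprod.hom_ext' <;> apply biprod.hom_ext <;>
      simp [← Functor.whiskerLeft_comp]
    · erw [biprod.inl_desc_assoc, biprod.lift_fst, ← Functor.whiskerLeft_comp, biprod.inl_fst]; rfl
    · erw [biprod.inl_desc_assoc, biprod.lift_snd, ← Functor.whiskerLeft_comp, biprod.inl_snd]; rfl
    · erw [biprod.inr_desc_assoc, biprod.lift_fst, ← Functor.whiskerLeft_comp, biprod.inr_fst]; rfl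
    · erw [biprod.inr_desc_assoc, biprod.lift_snd, ← Functor.whiskerLeft_comp, biprod.inr_snd]; rfl

end Aux

/-- Abstract indecomposability of an infinite concatenation of candy modules.
Let `M` be a pointwise finite dimensional persistence module over `ℤ^{n+1}` and let
`F : ℕ → Set ℤ^{n+1}` be an exhausting increasing family of finite convex subgrids
(every point of the support lies in some `F k`) such that every restriction `M|_{F k}`
is indecomposable.  If `M ≅ M₁ ⊞ M₂` then `M₁` or `M₂` is zero; hence `M` is
indecomposable. -/
theorem concatenation_indecomposable
    (K : Type) [Field K] (n : ℕ)
    (M : (Fin (n + 1) → ℤ) ⥤ ModuleCat.{0} K)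
    (hfd : ∀ x : Fin (n + 1) → ℤ, FiniteDimensional K (M.obj x))
    (F : ℕ → Set (Fin (n + 1) → ℤ))
    (hfin : ∀ k, (F k).Finite)
    (hconv : ∀ k, ∀ x ∈ F k, ∀ z ∈ F k, ∀ y, x ≤ y → y ≤ z → y ∈ F k)
    (hmono : ∀ k, F k ⊆ F (k + 1))
    (hexh : ∀ x : Fin (n + 1) → ℤ, ¬ IsZero (M.obj x) → ∃ k, x ∈ F k)
    -- each finite truncation is indecomposable:
    (hindec : ∀ k, ∀ A B : (F k : Set (Fin (n + 1) → ℤ)) ⥤ ModuleCat.{0} K,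
      Nonempty (restrictTo M (F k) ≅ A ⊞ B) → IsZero A ∨ IsZero B) :
    ∀ M₁ M₂ : (Fin (n + 1) → ℤ) ⥤ ModuleCat.{0} K,
      Nonempty (M ≅ M₁ ⊞ M₂) → IsZero M₁ ∨ IsZero M₂ := by
  intro M₁ M₂ ⟨e⟩
  by_contra hcon
  push_neg at hcon
  obtain ⟨h1, h2⟩ := hcon
  rw [Functor.isZero_iff] at h1 h2
  push_neg at h1 h2
  obtain ⟨x₁, hx₁⟩ := h1
  obtain ⟨x₂, hx₂⟩ := h2
  -- M.obj x₁ and M.obj x₂ are nonzero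
  have key : ∀ (x : Fin (n + 1) → ℤ), IsZero (M.obj x) →
      IsZero (M₁.obj x) ∧ IsZero (M₂.obj x) := by
    intro x hx
    have hz : IsZero ((M₁ ⊞ M₂).obj x) := hx.of_iso ((e.app x).symm)
    constructor
    · rw [IsZero.iff_id_eq_zero]
      have : (biprod.inl : M₁ ⟶ M₁ ⊞ M₂).app x ≫ (biprod.fst : M₁ ⊞ M₂ ⟶ M₁).app x
          = 𝟙 (M₁.obj x) := by
        rw [← NatTrans.comp_app, biprod.inl_fst, NatTrans.id_app]
      rw [← this, hz.eq_zero_of_tgt ((biprod.inl : M₁ ⟶ M₁ ⊞ M₂).app x), zero_comp]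
    · rw [IsZero.iff_id_eq_zero]
      have : (biprod.inr : M₂ ⟶ M₁ ⊞ M₂).app x ≫ (biprod.snd : M₁ ⊞ M₂ ⟶ M₂).app x
          = 𝟙 (M₂.obj x) := by
        rw [← NatTrans.comp_app, biprod.inr_snd, NatTrans.id_app]
      rw [← this, hz.eq_zero_of_tgt ((biprod.inr : M₂ ⟶ M₁ ⊞ M₂).app x), zero_comp]
  obtain ⟨k₁, hk₁⟩ := hexh x₁ (fun h => hx₁ (key x₁ h).1)
  obtain ⟨k₂, hk₂⟩ := hexh x₂ (fun h => hx₂ (key x₂ h).2)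
  have Fmono : ∀ i j : ℕ, i ≤ j → F i ⊆ F j := by
    intro i j hij
    induction j with
    | zero => simpa [Nat.le_zero.mp hij] using Set.Subset.rfl
    | succ m ih =>
      rcases Nat.lt_or_ge i (m + 1) with h | h
      · exact (ih (Nat.lt_succ_iff.mp h)).trans (hmono m)
      · have : i = m + 1 := le_antisymm hij h
        subst this; exact Set.Subset.rfl
  set k := max k₁ k₂ with hk
  have hx₁k : x₁ ∈ F k := Fmono k₁ k (le_max_left _ _) hk₁
  have hx₂k : x₂ ∈ F k := Fmono k₂ k (le_max_right _ _) hk₂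
  have iso : restrictTo M (F k) ≅ restrictTo M₁ (F k) ⊞ restrictTo M₂ (F k) :=
    (Functor.isoWhiskerLeft _ e).trans (restrictBiprodIso M₁ M₂ (F k))
  rcases hindec k _ _ ⟨iso⟩ with hz | hz
  · exact hx₁ ((Functor.isZero_iff _).mp hz ⟨x₁, hx₁k⟩)
  · exact hx₂ ((Functor.isZero_iff _).mp hz ⟨x₂, hx₂k⟩)
end
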